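/- Let O be a discrete valuation ring with fraction field K, let v be the normalized (surjective, ℤ-valued) discrete valuation on K, and let D ∈ K with v(D) = 1. If A, B ∈ K[X] are polynomials such that every coefficient of the polynomial A² − D·B² lies in O, then every coefficient of A lies in O and every coefficient of B lies in O. -/

import Mathlib

open Polynomial IsDedekindDomain IsDedekindDomain.HeightOneSpectrum IsLocalRing
open scoped Multiplicative WithZero

section Aux

variable {K : Type*} [Field K]

/-- Gauss's lemma core: product of two "unit-content" polynomials has a unit coefficient. -/
lemma gauss_aux (w : Valuation K ℤᵐ⁰) {P Q : Polynomial K}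
    (hP1 : ∀ i, w (P.coeff i) ≤ 1) (hQ1 : ∀ i, w (Q.coeff i) ≤ 1)
    (hP : ∃ i, w (P.coeff i) = 1) (hQ : ∃ j, w (Q.coeff j) = 1) :
    ∃ k, w ((P * Q).coeff k) = 1 := by
  classical
  set i₀ := Nat.find hP with hi₀
  set j₀ := Nat.find hQ with hj₀
  refine ⟨i₀ + j₀, ?_⟩
  rw [coeff_mul]
  have hmem : ((i₀, j₀) : ℕ × ℕ) ∈ Finset.HasAntidiagonal.antidiagonal (i₀ + j₀) := by simp
  rw [← Finset.add_sum_erase _ _ hmem]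
  have h1 : w (P.coeff i₀ * Q.coeff j₀) = 1 := by
    rw [map_mul, Nat.find_spec hP, Nat.find_spec hQ, one_mul]
  have h2 : w (∑ x ∈ (Finset.HasAntidiagonal.antidiagonal (i₀ + j₀)).erase (i₀, j₀),
      P.coeff x.1 * Q.coeff x.2) < 1 := by
    apply Valuation.map_sum_lt _ one_ne_zero
    intro x hx
    rw [Finset.mem_erase, Finset.HasAntidiagonal.mem_antidiagonal] at hx
    rw [map_mul]
    rcases lt_trichotomy x.1 i₀ with h | h | h
    · have hlt : w (P.coeff x.1) < 1 := lt_of_le_of_ne (hP1 _) (Nat.find_min hP h)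
      calc w (P.coeff x.1) * w (Q.coeff x.2) ≤ w (P.coeff x.1) * 1 := mul_le_mul_right (hQ1 _) _
        _ < 1 := by rwa [mul_one]
    · exfalso
      apply hx.1
      have h2 : x.2 = j₀ := by omega
      exact Prod.ext h h2
    · have hj : x.2 < j₀ := by omega
      have hlt : w (Q.coeff x.2) < 1 := lt_of_le_of_ne (hQ1 _) (Nat.find_min hQ hj)
      calc w (P.coeff x.1) * w (Q.coeff x.2) ≤ 1 * w (Q.coeff x.2) := mul_le_mul_left (hP1 _) _
        _ < 1 := by rwa [one_mul]
  rw [w.map_add_eq_of_lt_left (h1 ▸ h2), h1]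

/-- Coefficient bound for products. -/
lemma gauss_le_aux (w : Valuation K ℤᵐ⁰) {P Q : Polynomial K}
    (hP1 : ∀ i, w (P.coeff i) ≤ 1) (hQ1 : ∀ i, w (Q.coeff i) ≤ 1) :
    ∀ k, w ((P * Q).coeff k) ≤ 1 := by
  intro k
  rw [coeff_mul]
  apply w.map_sum_le
  intro x _
  rw [map_mul]
  calc w (P.coeff x.1) * w (Q.coeff x.2) ≤ 1 * 1 := mul_le_mul' (hP1 _) (hQ1 _)
    _ = 1 := mul_one 1

/-- Scale a nonzero polynomial to have unit content. -/
lemma exists_scale (w : Valuation K ℤᵐ⁰) {P : Polynomial K} (hP : P ≠ 0) :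
    ∃ (c : K) (P₁ : Polynomial K), c ≠ 0 ∧ P = Polynomial.C c * P₁ ∧
      (∀ i, w (P₁.coeff i) ≤ 1) ∧ ∃ i, w (P₁.coeff i) = 1 := by
  classical
  have hs : P.support.Nonempty := Polynomial.nonempty_support_iff.mpr hP
  obtain ⟨i₀, hi₀, hmax⟩ := P.support.exists_max_image (fun i => w (P.coeff i)) hs
  have hc0 : P.coeff i₀ ≠ 0 := Polynomial.mem_support_iff.mp hi₀
  have hwc : w (P.coeff i₀) ≠ 0 := by simpa using hc0
  refine ⟨P.coeff i₀, Polynomial.C (P.coeff i₀)⁻¹ * P, hc0, ?_, ?_, ⟨i₀, ?_⟩⟩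
  · rw [← mul_assoc, ← Polynomial.C_mul, mul_inv_cancel₀ hc0, Polynomial.C_1, one_mul]
  · intro i
    rw [Polynomial.coeff_C_mul, map_mul, map_inv₀]
    rcases eq_or_ne (P.coeff i) 0 with h | h
    · simp [h]
    · rw [inv_mul_le_iff₀ (zero_lt_iff.mpr hwc), mul_one]
      exact hmax i (Polynomial.mem_support_iff.mpr h)
  · rw [Polynomial.coeff_C_mul, map_mul, map_inv₀, inv_mul_cancel₀ hwc]

end Aux

section DVR

variable {O K : Type*} [CommRing O] [IsDomain O] [IsDiscreteValuationRing O] [Field K]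
  [Algebra O K] [IsFractionRing O K]

/-- The height-one prime of a DVR. -/
noncomputable def dvrSpec (O : Type*) [CommRing O] [IsDomain O] [IsDiscreteValuationRing O] :
    HeightOneSpectrum O :=
  ⟨IsLocalRing.maximalIdeal O, (IsLocalRing.maximalIdeal.isMaximal O).isPrime,
    IsDiscreteValuationRing.not_a_field O⟩

lemma mem_range_iff_val_le_one (x : K) :
    x ∈ (algebraMap O K).range ↔ (dvrSpec O).valuation K x ≤ 1 := by
  constructor
  · rintro ⟨r, rfl⟩
    exact valuation_le_one _ _
  · intro hx
    obtain ⟨⟨r, s⟩, rfl⟩ := IsLocalization.mk'_surjective (nonZeroDivisors O) x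
    rw [valuation_of_mk'] at hx
    have hs0 : (s : O) ≠ 0 := nonZeroDivisors.coe_ne_zero s
    have hsv : (dvrSpec O).intValuation s ≠ 0 := intValuation_ne_zero _ _ hs0
    have hle : (dvrSpec O).intValuation r ≤ (dvrSpec O).intValuation s := by
      rwa [div_le_one₀ (zero_lt_iff.mpr hsv)] at hx
    have hdvd : (s : O) ∣ r := by
      rcases ValuationRing.dvd_total (s : O) r with h | h
      · exact h
      · rcases eq_or_ne r 0 with hr | hr
        · simp [hr]
        obtain ⟨c, hc⟩ := h
        have hrv : (dvrSpec O).intValuation r ≠ 0 := intValuation_ne_zero _ _ hr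
        have hcs : (dvrSpec O).intValuation s =
            (dvrSpec O).intValuation r * (dvrSpec O).intValuation c := by
          rw [hc, map_mul]
        have hc1 : (dvrSpec O).intValuation c = 1 := by
          have hge : (dvrSpec O).intValuation s ≤ (dvrSpec O).intValuation r := by
            rw [hcs]
            calc (dvrSpec O).intValuation r * (dvrSpec O).intValuation c
                ≤ (dvrSpec O).intValuation r * 1 :=
                  mul_le_mul_right (intValuation_le_one _ _) _
              _ = _ := mul_one _
          have heq := le_antisymm hge hle
          have : (dvrSpec O).intValuation r * (dvrSpec O).intValuation c =
              (dvrSpec O).intValuation r * 1 := by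
            rw [mul_one, ← hcs, heq]
          exact mul_left_cancel₀ hrv this
        have hcu : IsUnit c := by
          by_contra hcu
          have hmem : c ∈ IsLocalRing.maximalIdeal O :=
            (IsLocalRing.mem_maximalIdeal c).mpr hcu
          have : (dvrSpec O).intValuation c < 1 := by
            rw [intValuation_lt_one_iff_dvd, Ideal.dvd_span_singleton]
            exact hmem
          exact absurd hc1 (ne_of_lt this)
        obtain ⟨u, rfl⟩ := hcu
        exact ⟨(u⁻¹ : Oˣ), by rw [hc]; simp [mul_assoc]⟩
    obtain ⟨t, ht⟩ := hdvd
    refine ⟨t, ?_⟩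
    rw [IsLocalization.eq_mk'_iff_mul_eq, ← map_mul]
    congr 1
    rw [ht, mul_comm]

end DVR

section Main

lemma zm_le_one (x : ℤ) :
    ((Multiplicative.ofAdd x : Multiplicative ℤ) : ℤᵐ⁰) ≤ 1 ↔ x ≤ 0 := by
  rw [← WithZero.coe_one, WithZero.coe_le_coe, ← ofAdd_zero, Multiplicative.ofAdd_le]

lemma zm_lt (x y : ℤ) :
    ((Multiplicative.ofAdd x : Multiplicative ℤ) : ℤᵐ⁰) < (Multiplicative.ofAdd y : Multiplicative ℤ) ↔ x < y := by
  rw [WithZero.coe_lt_coe, Multiplicative.ofAdd_lt]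

lemma zm_sq (x : ℤ) :
    ((Multiplicative.ofAdd x : Multiplicative ℤ) : ℤᵐ⁰) ^ 2 = ((Multiplicative.ofAdd (2 * x) : Multiplicative ℤ) : ℤᵐ⁰) := by
  rw [two_mul, ofAdd_add, WithZero.coe_mul, sq]

lemma zm_mul (x y : ℤ) :
    ((Multiplicative.ofAdd x : Multiplicative ℤ) : ℤᵐ⁰) * ((Multiplicative.ofAdd y : Multiplicative ℤ) : ℤᵐ⁰)
      = ((Multiplicative.ofAdd (x + y) : Multiplicative ℤ) : ℤᵐ⁰) := by
  rw [← WithZero.coe_mul, ← ofAdd_add]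

theorem coeffs_integral_of_norm_form_integral {O K : Type*} [CommRing O] [IsDomain O]
    [IsDiscreteValuationRing O] [Field K] [Algebra O K] [IsFractionRing O K]
    (D : K) (hD : ∃ d : O, Irreducible d ∧ algebraMap O K d = D)
    (A B : Polynomial K)
    (h : ∀ i, (A ^ 2 - Polynomial.C D * B ^ 2).coeff i ∈ (algebraMap O K).range) :
    (∀ i, A.coeff i ∈ (algebraMap O K).range) ∧
      (∀ i, B.coeff i ∈ (algebraMap O K).range) := by
  classical
  obtain ⟨d, hd_irr, hdD⟩ := hD
  set w : Valuation K ℤᵐ⁰ := (dvrSpec O).valuation K with hw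
  simp only [mem_range_iff_val_le_one (O := O)] at h ⊢
  rw [← hw] at h ⊢
  have hvD : w D = ((Multiplicative.ofAdd (-1 : ℤ) : Multiplicative ℤ) : ℤᵐ⁰) := by
    rw [← hdD, hw, valuation_of_algebraMap]
    exact intValuation_singleton _ hd_irr.ne_zero
      ((IsDiscreteValuationRing.irreducible_iff_uniformizer d).mp hd_irr)
  have hval : ∀ x : K, x ≠ 0 → ∃ m : ℤ,
      w x = ((Multiplicative.ofAdd m : Multiplicative ℤ) : ℤᵐ⁰) := by
    intro x hx
    obtain ⟨u, hu⟩ := WithZero.ne_zero_iff_exists.mp ((Valuation.ne_zero_iff w).mpr hx)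
    exact ⟨Multiplicative.toAdd u, hu.symm⟩
  have coeff_le : ∀ (c : K) (P : Polynomial K), w c ≤ 1 → (∀ i, w (P.coeff i) ≤ 1) →
      ∀ i, w ((Polynomial.C c * P).coeff i) ≤ 1 := by
    intro c P hc hP i
    rw [Polynomial.coeff_C_mul, map_mul]
    calc w c * w (P.coeff i) ≤ w c * 1 := mul_le_mul_right (hP i) _
      _ = w c := mul_one _
      _ ≤ 1 := hc
  rcases eq_or_ne B 0 with hB0 | hB0
  · subst hB0
    rcases eq_or_ne A 0 with hA0 | hA0
    · subst hA0; simp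
    obtain ⟨a, A₁, ha0, hA, hA1, hAex⟩ := exists_scale w hA0
    obtain ⟨m, hm⟩ := hval a ha0
    obtain ⟨k, hk⟩ := gauss_aux w hA1 hA1 hAex hAex
    have hco : (A ^ 2 - Polynomial.C D * (0 : Polynomial K) ^ 2).coeff k
        = a ^ 2 * (A₁ * A₁).coeff k := by
      rw [hA, zero_pow two_ne_zero, mul_zero, sub_zero, mul_pow, ← Polynomial.C_pow,
        Polynomial.coeff_C_mul, sq A₁]
    have hle := h k
    rw [hco, map_mul, map_pow, hk, mul_one, hm, zm_sq, zm_le_one] at hle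
    have haone : w a ≤ 1 := by rw [hm, zm_le_one]; omega
    refine ⟨fun i => ?_, fun i => by simp⟩
    rw [hA]
    exact coeff_le a A₁ haone hA1 i
  · obtain ⟨b, B₁, hb0, hB, hB1, hBex⟩ := exists_scale w hB0
    obtain ⟨n, hn⟩ := hval b hb0
    obtain ⟨l, hl⟩ := gauss_aux w hB1 hB1 hBex hBex
    rcases eq_or_ne A 0 with hA0 | hA0
    · subst hA0
      have hco : ((0 : Polynomial K) ^ 2 - Polynomial.C D * B ^ 2).coeff l
          = -(D * b ^ 2 * (B₁ * B₁).coeff l) := by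
        rw [hB, zero_pow two_ne_zero, zero_sub, mul_pow, ← Polynomial.C_pow, ← mul_assoc,
          ← Polynomial.C_mul, Polynomial.coeff_neg, Polynomial.coeff_C_mul, sq B₁]
      have hle := h l
      rw [hco, w.map_neg, map_mul, map_mul, hl, mul_one, map_pow, hvD, hn, zm_sq, zm_mul,
        zm_le_one] at hle
      have hbone : w b ≤ 1 := by rw [hn, zm_le_one]; omega
      refine ⟨fun i => by simp, fun i => ?_⟩
      rw [hB]
      exact coeff_le b B₁ hbone hB1 i
    · obtain ⟨a, A₁, ha0, hA, hA1, hAex⟩ := exists_scale w hA0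
      obtain ⟨m, hm⟩ := hval a ha0
      obtain ⟨k, hk⟩ := gauss_aux w hA1 hA1 hAex hAex
      have hco : ∀ j, (A ^ 2 - Polynomial.C D * B ^ 2).coeff j
          = a ^ 2 * (A₁ * A₁).coeff j - D * b ^ 2 * (B₁ * B₁).coeff j := by
        intro j
        rw [hA, hB, mul_pow, mul_pow, ← Polynomial.C_pow, ← Polynomial.C_pow, ← mul_assoc,
          ← Polynomial.C_mul, Polynomial.coeff_sub, Polynomial.coeff_C_mul,
          Polynomial.coeff_C_mul, sq A₁, sq B₁]
      -- w (a^2 * x) values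
      have hwa2 : ∀ j, w (a ^ 2 * (A₁ * A₁).coeff j)
          ≤ ((Multiplicative.ofAdd (2 * m) : Multiplicative ℤ) : ℤᵐ⁰) := by
        intro j
        rw [map_mul, map_pow, hm, zm_sq]
        calc _ ≤ ((Multiplicative.ofAdd (2 * m) : Multiplicative ℤ) : ℤᵐ⁰) * 1 :=
              mul_le_mul_right (gauss_le_aux w hA1 hA1 j) _
          _ = _ := mul_one _
      have hwb2 : ∀ j, w (D * b ^ 2 * (B₁ * B₁).coeff j)
          ≤ ((Multiplicative.ofAdd (-1 + 2 * n) : Multiplicative ℤ) : ℤᵐ⁰) := by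
        intro j
        rw [map_mul, map_mul, map_pow, hvD, hn, zm_sq, zm_mul]
        calc _ ≤ ((Multiplicative.ofAdd (-1 + 2 * n) : Multiplicative ℤ) : ℤᵐ⁰) * 1 :=
              mul_le_mul_right (gauss_le_aux w hB1 hB1 j) _
          _ = _ := mul_one _
      have hwa2k : w (a ^ 2 * (A₁ * A₁).coeff k)
          = ((Multiplicative.ofAdd (2 * m) : Multiplicative ℤ) : ℤᵐ⁰) := by
        rw [map_mul, map_pow, hk, mul_one, hm, zm_sq]
      have hwb2l : w (D * b ^ 2 * (B₁ * B₁).coeff l)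
          = ((Multiplicative.ofAdd (-1 + 2 * n) : Multiplicative ℤ) : ℤᵐ⁰) := by
        rw [map_mul, map_mul, map_pow, hl, mul_one, hvD, hn, zm_sq, zm_mul]
      have hmn : m ≤ 0 ∧ n ≤ 0 := by
        rcases lt_trichotomy (-1 + 2 * n) (2 * m) with hc | hc | hc
        · -- the a² term dominates at index k
          have hlt : w (D * b ^ 2 * (B₁ * B₁).coeff k) < w (a ^ 2 * (A₁ * A₁).coeff k) := by
            rw [hwa2k]
            exact lt_of_le_of_lt (hwb2 k) ((zm_lt _ _).mpr hc)
          have := h k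
          rw [hco k, w.map_sub_eq_of_lt_left hlt, hwa2k, zm_le_one] at this
          omega
        · omega
        · have hlt : w (a ^ 2 * (A₁ * A₁).coeff l) < w (D * b ^ 2 * (B₁ * B₁).coeff l) := by
            rw [hwb2l]
            exact lt_of_le_of_lt (hwa2 l) ((zm_lt _ _).mpr hc)
          have := h l
          rw [hco l, w.map_sub_eq_of_lt_right hlt, hwb2l, zm_le_one] at this
          omega
      have haone : w a ≤ 1 := by rw [hm, zm_le_one]; omega
      have hbone : w b ≤ 1 := by rw [hn, zm_le_one]; omega
      exact ⟨fun i => by rw [hA]; exact coeff_le a A₁ haone hA1 i,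
        fun i => by rw [hB]; exact coeff_le b B₁ hbone hB1 i⟩

end Main
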